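/- Let t and w be nonnegative forms on a complex vector space X, and let q be a nonnegative form with q[x] = sup_{n∈ℕ} inf_{y∈X} (w[x−y] + n·t[y]) for all x ∈ X (i.e. q = D_t w). Then q = t (i.e. t is a w-quasi-unit) if and only if inf_{y∈X} (t[x−y] + w[y]) = t[x]/2 for all x ∈ X (i.e. t : w = (1/2)·t). -/
import Mathlib


open scoped ComplexOrder

/-- A sesquilinear form (linear in the first, conjugate-linear in the second variable)
`t : X →ₗ[ℂ] X →ₗ⋆[ℂ] ℂ` is nonnegative if `t(x,x) ≥ 0` for all `x`. -/
def IsNNForm {X : Type*} [AddCommGroup X] [Module ℂ X]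
    (t : X →ₗ[ℂ] X →ₗ⋆[ℂ] ℂ) : Prop :=
  ∀ x : X, 0 ≤ t x x

/-- The quadratic form of a form: `t[x] = t(x,x)`, viewed as a real number. -/
def FQ {X : Type*} [AddCommGroup X] [Module ℂ X]
    (t : X →ₗ[ℂ] X →ₗ⋆[ℂ] ℂ) (x : X) : ℝ :=
  (t x x).re

/-- The order on forms: `t ≤ w` iff `t[x] ≤ w[x]` for all `x`. -/
def FLe {X : Type*} [AddCommGroup X] [Module ℂ X]
    (t w : X →ₗ[ℂ] X →ₗ⋆[ℂ] ℂ) : Prop :=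
  ∀ x : X, FQ t x ≤ FQ w x

/-- `t` and `w` are singular: the only nonnegative form below both is the zero form. -/
def SingForm {X : Type*} [AddCommGroup X] [Module ℂ X]
    (t w : X →ₗ[ℂ] X →ₗ⋆[ℂ] ℂ) : Prop :=
  ∀ s : X →ₗ[ℂ] X →ₗ⋆[ℂ] ℂ, IsNNForm s → FLe s t → FLe s w → s = 0

section aux
variable {X : Type*} [AddCommGroup X] [Module ℂ X]

lemma FQ_nonneg {t : X →ₗ[ℂ] X →ₗ⋆[ℂ] ℂ} (ht : IsNNForm t) (x : X) : 0 ≤ FQ t x := by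
  have h := ht x
  rw [Complex.le_def] at h
  simpa [FQ] using h.1

lemma FQ_zero (t : X →ₗ[ℂ] X →ₗ⋆[ℂ] ℂ) : FQ t (0:X) = 0 := by simp [FQ]

lemma FQ_expand (t : X →ₗ[ℂ] X →ₗ⋆[ℂ] ℂ) (u v : X) :
    FQ t (u + v) = FQ t u + FQ t v + ((t u v).re + (t v u).re) := by
  simp [FQ, map_add, LinearMap.add_apply]
  ring

lemma FQ_expand_sub (t : X →ₗ[ℂ] X →ₗ⋆[ℂ] ℂ) (u v : X) :
    FQ t (u - v) = FQ t u + FQ t v - ((t u v).re + (t v u).re) := by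
  simp [FQ, map_sub, LinearMap.sub_apply]
  ring

lemma FQ_smul_real (t : X →ₗ[ℂ] X →ₗ⋆[ℂ] ℂ) (r : ℝ) (x : X) :
    FQ t ((r:ℂ) • x) = r^2 * FQ t x := by
  unfold FQ
  rw [LinearMap.map_smulₛₗ, map_smul t, LinearMap.smul_apply]
  simp [Complex.conj_ofReal, smul_eq_mul, Complex.mul_re]
  ring

lemma FQ_double (t : X →ₗ[ℂ] X →ₗ⋆[ℂ] ℂ) (x : X) : FQ t (x + x) = 4 * FQ t x := by
  rw [FQ_expand]; simp [FQ]; ring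

lemma E_smul_real (t : X →ₗ[ℂ] X →ₗ⋆[ℂ] ℂ) (r : ℝ) (u v : X) :
    (t u ((r:ℂ) • v)).re + (t ((r:ℂ) • v) u).re = r * ((t u v).re + (t v u).re) := by
  rw [LinearMap.map_smulₛₗ, map_smul t, LinearMap.smul_apply]
  simp [Complex.conj_ofReal, smul_eq_mul, Complex.mul_re]
  ring

/-- Cauchy–Schwarz for the "cross term". -/
lemma E_sq_le {t : X →ₗ[ℂ] X →ₗ⋆[ℂ] ℂ} (ht : IsNNForm t) (u v : X) :
    ((t u v).re + (t v u).re)^2 ≤ 4 * (FQ t u * FQ t v) := by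
  set E := (t u v).re + (t v u).re with hE
  have key : ∀ r : ℝ, 0 ≤ FQ t v * (r * r) + E * r + FQ t u := by
    intro r
    have h0 : 0 ≤ FQ t (u + (r:ℂ) • v) := FQ_nonneg ht _
    rw [FQ_expand, FQ_smul_real, E_smul_real] at h0
    have h2 : r * r = r ^ 2 := by ring
    rw [hE, h2]; linarith
  have hd := discrim_le_zero key
  rw [discrim] at hd
  nlinarith [hd]

lemma E_le_sqrt {t : X →ₗ[ℂ] X →ₗ⋆[ℂ] ℂ} (ht : IsNNForm t) (u v : X) :
    (t u v).re + (t v u).re ≤ 2 * Real.sqrt (FQ t u * FQ t v) := by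
  have h := E_sq_le ht u v
  have hs : Real.sqrt (FQ t u * FQ t v) ^ 2 = FQ t u * FQ t v :=
    Real.sq_sqrt (mul_nonneg (FQ_nonneg ht u) (FQ_nonneg ht v))
  nlinarith [Real.sqrt_nonneg (FQ t u * FQ t v)]

lemma neg_sqrt_le_E {t : X →ₗ[ℂ] X →ₗ⋆[ℂ] ℂ} (ht : IsNNForm t) (u v : X) :
    -(2 * Real.sqrt (FQ t u * FQ t v)) ≤ (t u v).re + (t v u).re := by
  have h := E_sq_le ht u v
  have hs : Real.sqrt (FQ t u * FQ t v) ^ 2 = FQ t u * FQ t v :=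
    Real.sq_sqrt (mul_nonneg (FQ_nonneg ht u) (FQ_nonneg ht v))
  nlinarith [Real.sqrt_nonneg (FQ t u * FQ t v)]

/-- Forms with equal diagonals are equal (complex polarization). -/
lemma form_ext (q t : X →ₗ[ℂ] X →ₗ⋆[ℂ] ℂ) (h : ∀ x : X, q x x = t x x) : q = t := by
  ext x y
  have e1 := h (x + y)
  simp only [map_add, LinearMap.add_apply] at e1
  rw [h x, h y] at e1
  have e2 := h (x + Complex.I • y)
  simp only [map_add, LinearMap.add_apply, LinearMap.map_smulₛₗ, map_smul,
    LinearMap.smul_apply, smul_eq_mul, Complex.conj_I] at e2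
  rw [h x, h y] at e2
  have hI := Complex.I_ne_zero
  linear_combination e1 / 2 + Complex.I * e2 / 2 +
    (((q x) y + (t y) x - (t x) y - (q y) x) / 2) * Complex.I_sq


lemma FQ_half (t : X →ₗ[ℂ] X →ₗ⋆[ℂ] ℂ) (x : X) : FQ t ((1/2 : ℂ) • x) = FQ t x / 4 := by
  have hc : ((1/2 : ℝ) : ℂ) = (1/2 : ℂ) := by norm_num
  rw [← hc, FQ_smul_real]; ring

lemma diag_real {q : X →ₗ[ℂ] X →ₗ⋆[ℂ] ℂ} (hq : IsNNForm q) (x : X) :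
    q x x = ((FQ q x : ℝ) : ℂ) := by
  have h := hq x
  rw [Complex.le_def] at h
  exact Complex.ext (by simp [FQ]) (by simpa using h.2.symm)

end aux

set_option maxHeartbeats 1000000 in
theorem quasi_unit_iff_parallel_sum_half
    {X : Type*} [AddCommGroup X] [Module ℂ X]
    (t w q : X →ₗ[ℂ] X →ₗ⋆[ℂ] ℂ)
    (ht : IsNNForm t) (hw : IsNNForm w) (hq : IsNNForm q)
    (hqd : ∀ x : X, FQ q x = ⨆ n : ℕ, ⨅ y : X, (FQ w (x - y) + (n : ℝ) * FQ t y)) :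
    q = t ↔ ∀ x : X, (⨅ y : X, (FQ t (x - y) + FQ w y)) = FQ t x / 2 := by
  have hbb1 : ∀ (x : X) (n : ℕ),
      BddBelow (Set.range fun y : X => FQ w (x - y) + (n:ℝ) * FQ t y) := by
    intro x n
    refine ⟨0, ?_⟩
    rintro r ⟨y, rfl⟩
    have h1 := FQ_nonneg hw (x - y)
    have h2 := FQ_nonneg ht y
    have h3 : (0:ℝ) ≤ (n:ℝ) := Nat.cast_nonneg n
    positivity
  have hbb2 : ∀ x : X, BddBelow (Set.range fun y : X => FQ t (x - y) + FQ w y) := by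
    intro x
    refine ⟨0, ?_⟩
    rintro r ⟨y, rfl⟩
    have h1 := FQ_nonneg ht (x - y)
    have h2 := FQ_nonneg hw y
    positivity
  have hinf_le_w : ∀ (x : X) (n : ℕ),
      (⨅ y : X, (FQ w (x - y) + (n:ℝ) * FQ t y)) ≤ FQ w x := by
    intro x n
    have h := ciInf_le (hbb1 x n) (0 : X)
    simpa [FQ_zero] using h
  have hba : ∀ x : X,
      BddAbove (Set.range fun n : ℕ => ⨅ y : X, (FQ w (x - y) + (n:ℝ) * FQ t y)) := by
    intro x
    exact ⟨FQ w x, by rintro r ⟨n, rfl⟩; exact hinf_le_w x n⟩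
  constructor
  · -- quasi-unit → parallel sum half
    intro hqt
    subst hqt
    intro x
    have htw : ∀ z : X, FQ q z ≤ FQ w z := by
      intro z
      rw [hqd z]
      exact ciSup_le fun n => hinf_le_w z n
    set T := FQ q x with hTdef
    have hTnn : 0 ≤ T := FQ_nonneg ht x
    apply le_antisymm
    · -- inf ≤ T/2
      refine le_of_forall_sub_le fun ε hε => ?_
      have key : (⨅ y : X, (FQ q (x - y) + FQ w y)) ≤ T / 2 + ε := by
        set δ := min ε (ε^2 / (16 * (T+1))) with hδdef
        have hδpos : 0 < δ := lt_min hε (by positivity)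
        have hδε : δ ≤ ε := min_le_left _ _
        obtain ⟨n, hn⟩ := exists_nat_gt ((T + ε) / δ)
        have hn0 : (0:ℝ) < (n:ℝ) :=
          lt_of_le_of_lt (div_nonneg (by linarith) hδpos.le) hn
        have hinfle : (⨅ y : X, (FQ w (x - y) + (n:ℝ) * FQ q y)) ≤ T := by
          have h := le_ciSup (hba x) n
          rw [← hqd x] at h
          exact h
        have hlt : (⨅ y : X, (FQ w (x - y) + (n:ℝ) * FQ q y)) < T + ε :=
          lt_of_le_of_lt hinfle (by linarith)
        obtain ⟨y, hy⟩ := exists_lt_of_ciInf_lt hlt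
        have hwxy : FQ w (x - y) ≤ T + ε := by
          have h2 := FQ_nonneg ht y
          nlinarith
        have hty : FQ q y ≤ δ := by
          have h2 : T + ε < (n:ℝ) * δ := (div_lt_iff₀ hδpos).mp hn
          have h3 := FQ_nonneg hw (x - y)
          nlinarith [FQ_nonneg ht y]
        have hsq : Real.sqrt (FQ q x * FQ q y) ≤ ε / 4 := by
          have h1 : FQ q x * FQ q y ≤ (ε/4)^2 := by
            have h2 : δ ≤ ε^2 / (16 * (T+1)) := min_le_right _ _
            have h3 := FQ_nonneg ht y
            have h4 : T * FQ q y ≤ (T+1) * δ := by nlinarith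
            have h5 : (T+1) * δ ≤ (T+1) * (ε^2 / (16 * (T+1))) := by nlinarith
            have h6 : (T+1) * (ε^2 / (16 * (T+1))) = ε^2/16 := by
              field_simp
            nlinarith
          calc Real.sqrt (FQ q x * FQ q y) ≤ Real.sqrt ((ε/4)^2) :=
                Real.sqrt_le_sqrt h1
            _ = ε/4 := Real.sqrt_sq (by positivity)
        have hxy : FQ q (x + y) ≤ T + δ + ε/2 := by
          rw [FQ_expand q x y]
          have hE := E_le_sqrt ht x y
          rw [← hTdef]  -- maybe unnecessary
          nlinarith
        have hid : x - (1/2 : ℂ) • (x - y) = (1/2 : ℂ) • (x + y) := by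
          module
        have hle := ciInf_le (hbb2 x) ((1/2 : ℂ) • (x - y))
        rw [hid, FQ_half, FQ_half] at hle
        have h8 := FQ_nonneg ht y
        nlinarith
      linarith
    · -- T/2 ≤ inf
      refine le_ciInf fun y => ?_
      have h1 : FQ q y ≤ FQ w y := htw y
      have hpar : FQ q ((x-y) + y) + FQ q ((x-y) - y) = 2*FQ q (x-y) + 2*FQ q y := by
        rw [FQ_expand q (x-y) y, FQ_expand_sub q (x-y) y]; ring
      have e1 : (x - y) + y = x := by abel
      rw [e1] at hpar
      have h2 := FQ_nonneg ht ((x-y) - y)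
      have h3 := FQ_nonneg ht (x-y)
      linarith
  · -- parallel sum half → quasi-unit
    intro hps
    have htw : ∀ b : X, FQ t b ≤ FQ w b := by
      intro b
      have h := ciInf_le (hbb2 (b+b)) b
      rw [hps (b+b)] at h
      have e1 : b + b - b = b := by abel
      rw [e1, FQ_double] at h
      linarith
    have hFQ : ∀ x : X, FQ q x = FQ t x := by
      intro x
      set T := FQ t x with hTdef
      have hTnn : 0 ≤ T := FQ_nonneg ht x
      rw [hqd x]
      apply le_antisymm
      · refine ciSup_le fun n => ?_
        refine le_of_forall_sub_le fun ε hε => ?_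
        have key : (⨅ y : X, (FQ w (x - y) + (n:ℝ) * FQ t y)) ≤ T + ε := by
          set ε₀ := min (ε / (n + 2)) (ε^2 / (16 * (T+1))) with hε₀def
          have hε₀pos : 0 < ε₀ := lt_min (by positivity) (by positivity)
          have h2T : FQ t (x+x) / 2 = 2*T := by rw [FQ_double]; ring
          have hlt : (⨅ y : X, (FQ t ((x+x) - y) + FQ w y)) < 2*T + ε₀ := by
            rw [hps (x+x), h2T]; linarith
          obtain ⟨y, hy⟩ := exists_lt_of_ciInf_lt hlt
          have hwty : FQ t y ≤ FQ w y := htw y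
          have hpar : FQ t ((x+x-y) + y) + FQ t ((x+x-y) - y)
              = 2*FQ t (x+x-y) + 2*FQ t y := by
            rw [FQ_expand t (x+x-y) y, FQ_expand_sub t (x+x-y) y]; ring
          have e1 : (x+x-y) + y = x + x := by abel
          have e2 : (x+x-y) - y = (x-y) + (x-y) := by abel
          rw [e1, e2, FQ_double, FQ_double] at hpar
          have hxmy : FQ t (x - y) ≤ ε₀ / 2 := by linarith
          have hsq : Real.sqrt (T * FQ t (x-y)) ≤ ε / 4 := by
            have h1 : T * FQ t (x-y) ≤ (ε/4)^2 := by
              have h2 : ε₀ ≤ ε^2 / (16 * (T+1)) := min_le_right _ _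
              have h3 := FQ_nonneg ht (x-y)
              have h4 : T * FQ t (x-y) ≤ (T+1) * ε₀ := by nlinarith
              have h6 : (T+1) * (ε^2 / (16 * (T+1))) = ε^2/16 := by field_simp
              nlinarith
            calc Real.sqrt (T * FQ t (x-y)) ≤ Real.sqrt ((ε/4)^2) :=
                  Real.sqrt_le_sqrt h1
              _ = ε/4 := Real.sqrt_sq (by positivity)
          have hlow : T + FQ t (x-y) - 2*Real.sqrt (T * FQ t (x-y))
              ≤ FQ t (x + (x-y)) := by
            rw [FQ_expand t x (x-y)]
            have := neg_sqrt_le_E ht x (x-y)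
            linarith
          have e3 : x + x - y = x + (x - y) := by abel
          rw [e3] at hy
          have hwy : FQ w y ≤ T + ε₀ + ε/2 := by
            have h3 := FQ_nonneg ht (x-y)
            nlinarith
          have hfin := ciInf_le (hbb1 x n) (x - y)
          have e4 : x - (x - y) = y := by abel
          rw [e4] at hfin
          have hε₀n : ε₀ * (n + 2) ≤ ε := by
            have h1 : ε₀ ≤ ε / (n+2) := min_le_left _ _
            have h2 : (0:ℝ) < (n:ℝ) + 2 := by positivity
            rw [← le_div_iff₀ h2] at *
            linarith
          have hnn : (0:ℝ) ≤ (n:ℝ) := Nat.cast_nonneg n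
          nlinarith
        linarith
      · refine le_of_forall_sub_le fun ε hε => ?_
        obtain ⟨n, hn⟩ := exists_nat_gt (T / ε)
        have hn1 : (0:ℝ) < (n:ℝ) + 1 := by positivity
        have hlb : ∀ y : X, (n:ℝ)/((n:ℝ)+1) * T ≤ FQ w (x - y) + (n:ℝ) * FQ t y := by
          intro y
          have h1 : FQ t (x - y) ≤ FQ w (x - y) := htw _
          have hexp := FQ_expand t (x - y) y
          have e1 : (x - y) + y = x := by abel
          rw [e1] at hexp
          have hE := E_le_sqrt ht (x-y) y
          set α := Real.sqrt (FQ t (x-y)) with hα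
          set β := Real.sqrt (FQ t y) with hβ
          have hα2 : α^2 = FQ t (x-y) := Real.sq_sqrt (FQ_nonneg ht _)
          have hβ2 : β^2 = FQ t y := Real.sq_sqrt (FQ_nonneg ht _)
          have hαβ : Real.sqrt (FQ t (x-y) * FQ t y) = α * β := by
            rw [hα, hβ, Real.sqrt_mul (FQ_nonneg ht _)]
          rw [hαβ] at hE
          rw [div_mul_eq_mul_div, div_le_iff₀ hn1]
          have hαnn := Real.sqrt_nonneg (FQ t (x-y))
          have hβnn := Real.sqrt_nonneg (FQ t y)
          have hna : (0:ℝ) ≤ (n:ℝ) := Nat.cast_nonneg n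
          have f1 : (n:ℝ) * ((t (x-y)) y).re + (n:ℝ) * ((t y) (x-y)).re
              ≤ (n:ℝ) * (2*(α*β)) := by nlinarith [mul_le_mul_of_nonneg_left hE hna]
          have f2 : (0:ℝ) ≤ (α - (n:ℝ)*β)^2 := sq_nonneg _
          have f3 : ((n:ℝ)+1) * FQ t (x-y) ≤ ((n:ℝ)+1) * FQ w (x-y) :=
            mul_le_mul_of_nonneg_left h1 (by positivity)
          have f5 : (n:ℝ)^2 * β^2 = (n:ℝ)^2 * FQ t y := by rw [hβ2]
          have f6 : (n:ℝ) * T = (n:ℝ) * FQ t (x-y) + (n:ℝ) * FQ t y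
              + ((n:ℝ) * ((t (x-y)) y).re + (n:ℝ) * ((t y) (x-y)).re) := by
            rw [hTdef, hexp]; ring
          nlinarith [f1, f2, f3, f5, f6, hα2]
        have h2 : (n:ℝ)/((n:ℝ)+1) * T ≤ ⨅ y : X, (FQ w (x - y) + (n:ℝ) * FQ t y) :=
          le_ciInf hlb
        have h3 := le_ciSup (hba x) n
        have h4 : T - ε ≤ (n:ℝ)/((n:ℝ)+1) * T := by
          have h5 : T < (n:ℝ) * ε := (div_lt_iff₀ hε).mp hn
          rw [div_mul_eq_mul_div, le_div_iff₀ hn1]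
          nlinarith
        linarith
    refine form_ext q t fun x => ?_
    rw [diag_real hq, diag_real ht, hFQ x]
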